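/- arXiv:1703.02424 — 2 statements merged into one kernel-verified Lean document; each statement's English description precedes it below -/
import Mathlib

section
/- Let h : ℝⁿ × ℝᵐ → ℝ be C², let y* : ℝⁿ → ℝᵐ be C¹ with ∇_y h(x, y*(x)) = 0 for all x, and define H(x) = h(x, y*(x)). Then the Hessian of H at x equals [I; Dy*(x)]ᵀ · ∇²h(x, y*(x)) · [I; Dy*(x)], where ∇²h is the full Hessian of h in (x,y). In particular, if ∇²h(x, y*(x)) is positive semidefinite then ∇²H(x) is positive semidefinite. -/
open ContinuousLinearMap

theorem stmt_5 (n m : ℕ)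
    (h : (EuclideanSpace ℝ (Fin n)) × (EuclideanSpace ℝ (Fin m)) → ℝ)
    (hh : ContDiff ℝ 2 h)
    (ystar : EuclideanSpace ℝ (Fin n) → EuclideanSpace ℝ (Fin m))
    (hy : ContDiff ℝ 1 ystar)
    (hcrit : ∀ x : EuclideanSpace ℝ (Fin n),
      fderiv ℝ (fun y => h (x, y)) (ystar x) = 0)
    (H : EuclideanSpace ℝ (Fin n) → ℝ) (hH : ∀ x, H x = h (x, ystar x)) :
    ∀ x : EuclideanSpace ℝ (Fin n),
      (∀ u : EuclideanSpace ℝ (Fin n),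
        iteratedFDeriv ℝ 2 H x ![u, u] =
          iteratedFDeriv ℝ 2 h (x, ystar x)
            ![(u, fderiv ℝ ystar x u), (u, fderiv ℝ ystar x u)]) ∧
      ((∀ z : (EuclideanSpace ℝ (Fin n)) × (EuclideanSpace ℝ (Fin m)),
          0 ≤ iteratedFDeriv ℝ 2 h (x, ystar x) ![z, z]) →
        ∀ u : EuclideanSpace ℝ (Fin n), 0 ≤ iteratedFDeriv ℝ 2 H x ![u, u]) := by
  have E := EuclideanSpace ℝ (Fin n)
  set g : EuclideanSpace ℝ (Fin n) → (EuclideanSpace ℝ (Fin n)) × (EuclideanSpace ℝ (Fin m)) :=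
    fun x => (x, ystar x) with hg
  have hyd : Differentiable ℝ ystar := hy.differentiable one_ne_zero
  have hhd : Differentiable ℝ h := hh.differentiable (by norm_num)
  have hDh : ContDiff ℝ 1 (fderiv ℝ h) := by
    have h2 : ContDiff ℝ (1 + 1) h := by
      rw [one_add_one_eq_two]; exact hh
    exact (contDiff_succ_iff_fderiv.mp h2).2.2
  have hDhd : Differentiable ℝ (fderiv ℝ h) := hDh.differentiable one_ne_zero
  have hgd : ∀ x, HasFDerivAt g
      ((ContinuousLinearMap.id ℝ (EuclideanSpace ℝ (Fin n))).prod (fderiv ℝ ystar x)) x :=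
    fun x => HasFDerivAt.prodMk (hasFDerivAt_id x) (hyd x).hasFDerivAt
  have crit : ∀ x, (fderiv ℝ h (g x)).comp (inr ℝ _ _) = 0 := by
    intro x
    have h1 : HasFDerivAt (fun y => h (x, y))
        ((fderiv ℝ h (g x)).comp (inr ℝ _ _)) (ystar x) :=
      (hhd (g x)).hasFDerivAt.comp (ystar x) (hasFDerivAt_prodMk_right x (ystar x))
    rw [← h1.fderiv]; exact hcrit x
  have crit0 : ∀ x w, fderiv ℝ h (g x) (0, w) = 0 := by
    intro x w
    have := congrArg (fun (L : EuclideanSpace ℝ (Fin m) →L[ℝ] ℝ) => L w) (crit x)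
    simpa using this
  set Φ : EuclideanSpace ℝ (Fin n) → (EuclideanSpace ℝ (Fin n) →L[ℝ] ℝ) :=
    fun x => (fderiv ℝ h (g x)).comp (inl ℝ _ _) with hΦ
  have hHd : ∀ x, HasFDerivAt H (Φ x) x := by
    intro x
    have hHg : H = h ∘ g := funext hH
    have h2 : HasFDerivAt H ((fderiv ℝ h (g x)).comp
        ((ContinuousLinearMap.id ℝ (EuclideanSpace ℝ (Fin n))).prod (fderiv ℝ ystar x))) x := by
      rw [hHg]; exact (hhd (g x)).hasFDerivAt.comp x (hgd x)
    have heq : (fderiv ℝ h (g x)).comp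
        ((ContinuousLinearMap.id ℝ (EuclideanSpace ℝ (Fin n))).prod (fderiv ℝ ystar x)) = Φ x := by
      ext v
      have hsplit : ((v, fderiv ℝ ystar x v) : _ × _) =
          (v, 0) + ((0 : EuclideanSpace ℝ (Fin n)), fderiv ℝ ystar x v) := by
        simp [Prod.mk_add_mk]
      simp only [hΦ, coe_comp', Function.comp_apply, prod_apply, coe_id', id_eq, inl_apply]
      rw [hsplit, map_add, crit0 x]
      simp
    rw [← heq]; exact h2
  have hfH : fderiv ℝ H = Φ := funext fun x => (hHd x).fderiv
  have hDhg : ∀ x, HasFDerivAt (fun x => fderiv ℝ h (g x))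
      ((fderiv ℝ (fderiv ℝ h) (g x)).comp
        ((ContinuousLinearMap.id ℝ (EuclideanSpace ℝ (Fin n))).prod (fderiv ℝ ystar x))) x :=
    fun x => (hDhd (g x)).hasFDerivAt.comp x (hgd x)
  have crit2 : ∀ x u w,
      fderiv ℝ (fderiv ℝ h) (g x) ((u, fderiv ℝ ystar x u)) (0, w) = 0 := by
    intro x u w
    have hzero : (fun x => (fderiv ℝ h (g x)).comp (inr ℝ _ _)) =
        fun _ : EuclideanSpace ℝ (Fin n) =>
          (0 : EuclideanSpace ℝ (Fin m) →L[ℝ] ℝ) := funext crit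
    have hd1 := HasFDerivAt.clm_comp (hDhg x)
      (hasFDerivAt_const (inr ℝ (EuclideanSpace ℝ (Fin n)) (EuclideanSpace ℝ (Fin m))) x)
    rw [hzero] at hd1
    have hd2 : HasFDerivAt (fun _ : EuclideanSpace ℝ (Fin n) =>
        (0 : EuclideanSpace ℝ (Fin m) →L[ℝ] ℝ))
        (0 : EuclideanSpace ℝ (Fin n) →L[ℝ] (EuclideanSpace ℝ (Fin m) →L[ℝ] ℝ)) x := by
      exact hasFDerivAt_const _ x
    have huniq := hd1.unique hd2
    have := congrArg (fun L => L u w) huniq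
    simpa using this
  have key : ∀ x u, fderiv ℝ (fderiv ℝ H) x u u =
      fderiv ℝ (fderiv ℝ h) (g x) ((u, fderiv ℝ ystar x u)) ((u, fderiv ℝ ystar x u)) := by
    intro x u
    have hd1 := HasFDerivAt.clm_comp (hDhg x)
      (hasFDerivAt_const (inl ℝ (EuclideanSpace ℝ (Fin n)) (EuclideanSpace ℝ (Fin m))) x)
    have lhs : fderiv ℝ (fderiv ℝ H) x u u =
        fderiv ℝ (fderiv ℝ h) (g x) ((u, fderiv ℝ ystar x u)) (u, 0) := by
      rw [hfH, hΦ, hd1.fderiv]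
      simp
    rw [lhs]
    have hsplit : ((u, fderiv ℝ ystar x u) : _ × _) =
        (u, 0) + ((0 : EuclideanSpace ℝ (Fin n)), fderiv ℝ ystar x u) := by
      simp [Prod.mk_add_mk]
    have hadd := map_add (fderiv ℝ (fderiv ℝ h) (g x) ((u, fderiv ℝ ystar x u)))
      ((u, (0 : EuclideanSpace ℝ (Fin m))) : _ × _)
      (((0 : EuclideanSpace ℝ (Fin n)), fderiv ℝ ystar x u) : _ × _)
    rw [← hsplit] at hadd
    rw [hadd, crit2 x u, add_zero]
  intro x
  have main : ∀ u, iteratedFDeriv ℝ 2 H x ![u, u] =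
      iteratedFDeriv ℝ 2 h (x, ystar x)
        ![(u, fderiv ℝ ystar x u), (u, fderiv ℝ ystar x u)] := by
    intro u
    rw [iteratedFDeriv_two_apply, iteratedFDeriv_two_apply]
    simpa using key x u
  exact ⟨main, fun hpos u => by rw [main u]; exact hpos _⟩
end

section
/- Let M be a positive definite diagonal n×n real matrix and T : ℝⁿ → ℝⁿ a C¹ map with fixed point p (T(p) = p), and suppose ∇²H(p) = 2M(I − ∇T(p)) is symmetric. If some eigenvalue of ∇T(p) is real and greater than 1, then ∇²H(p) has a negative eigenvalue, so p is a saddle point (not a local minimum) of H. -/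
theorem stmt_18 (n : ℕ) (d : Fin n → ℝ) (hd : ∀ i, 0 < d i)
    (M : Matrix (Fin n) (Fin n) ℝ) (hM : M = Matrix.diagonal d)
    (T : EuclideanSpace ℝ (Fin n) → EuclideanSpace ℝ (Fin n))
    (hT : ContDiff ℝ 1 T) (p : EuclideanSpace ℝ (Fin n)) (hfix : T p = p)
    (J : Matrix (Fin n) (Fin n) ℝ)
    (hJ : ∀ v : EuclideanSpace ℝ (Fin n), Matrix.toEuclideanLin J v = fderiv ℝ T p v)
    (Hm : Matrix (Fin n) (Fin n) ℝ) (hHm : Hm = (2 : ℝ) • (M * (1 - J)))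
    (hsym : Hm.IsSymm)
    (hev : ∃ μ : ℝ, 1 < μ ∧ ∃ v : Fin n → ℝ, v ≠ 0 ∧ J.mulVec v = μ • v) :
    ∃ lam : ℝ, lam < 0 ∧ ∃ w : Fin n → ℝ, w ≠ 0 ∧ Hm.mulVec w = lam • w := by
  obtain ⟨μ, hμ, v, hv, hJv⟩ := hev
  have hHerm : Hm.IsHermitian := by
    rwa [Matrix.IsHermitian, Matrix.conjTranspose_eq_transpose_of_trivial, ← Matrix.IsSymm]
  -- quadratic form at v is negative
  have hQv : dotProduct v (Hm.mulVec v) < 0 := by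
    have hMv : Hm.mulVec v = (2 * (1 - μ)) • M.mulVec v := by
      rw [hHm, Matrix.smul_mulVec, ← Matrix.mulVec_mulVec, Matrix.sub_mulVec,
        Matrix.one_mulVec, hJv, mul_smul, ← Matrix.mulVec_smul]
      congr 1
      rw [Matrix.mulVec_smul, Matrix.mulVec_sub, Matrix.mulVec_smul, sub_smul, one_smul,
        smul_sub]
    rw [hMv, dotProduct_smul, hM]
    have hpos : 0 < dotProduct v ((Matrix.diagonal d).mulVec v) := by
      have : dotProduct v ((Matrix.diagonal d).mulVec v) = ∑ i, d i * v i ^ 2 := by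
        simp only [dotProduct, Matrix.mulVec_diagonal]
        exact Finset.sum_congr rfl fun i _ => by ring
      rw [this]
      obtain ⟨i, hi⟩ := Function.ne_iff.mp hv
      refine Finset.sum_pos' (fun j _ => ?_) ⟨i, Finset.mem_univ i, ?_⟩
      · have := (hd j).le
        positivity
      · have hvi : v i ≠ 0 := hi
        have : 0 < v i ^ 2 := by positivity
        exact mul_pos (hd i) this
    have hneg : 2 * (1 - μ) < 0 := by nlinarith
    exact mul_neg_of_neg_of_pos hneg hpos
  by_contra hcon
  push_neg at hcon
  have hnn : ∀ i, 0 ≤ hHerm.eigenvalues i := by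
    intro i
    by_contra hlt
    push_neg at hlt
    exact absurd (hHerm.mulVec_eigenvectorBasis i)
      (fun h => absurd h (by
        intro h'
        have := hcon (hHerm.eigenvalues i) hlt (hHerm.eigenvectorBasis i)
          (fun h => hHerm.eigenvectorBasis.orthonormal.ne_zero i (by simpa using congrArg (WithLp.toLp 2) h))
        exact this h'))
  have hPSD : Hm.PosSemidef := hHerm.posSemidef_iff_eigenvalues_nonneg.mpr hnn
  have := hPSD.dotProduct_mulVec_nonneg v
  simp only [star_trivial] at this
  exact absurd this (not_le.mpr hQv)
end
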